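/- Expansion Lemma: In a stabilizer code, let U and T be correctable sets of qubits with ∂₊T ⊆ U, where ∂₊T is the set of qubits outside T sharing a stabilizer generator with a qubit in T. Then T ∪ U is correctable. (Formally: if every logical operator can be cleaned off U, i.e., has a representative in its coset modulo stabilizers supported in the complement of U, and T is correctable, then every logical operator supported in T ∪ U is a stabilizer.) -/

import Mathlib

/-- A Pauli operator on `n` qubits, modulo phase, represented symplectically:
an X-part and a Z-part, each a vector in `F₂ⁿ`. -/
abbrev PauliVec (n : ℕ) := (Fin n → ZMod 2) × (Fin n → ZMod 2)

/-- The standard symplectic form on `F₂^{2n}`: two Pauli operators commute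
iff the form vanishes. -/
def sympForm {n : ℕ} (u v : PauliVec n) : ZMod 2 :=
  ∑ i : Fin n, (u.1 i * v.2 i + u.2 i * v.1 i)

/-- Support of a Pauli operator: the qubits on which it acts nontrivially. -/
def psupp {n : ℕ} (u : PauliVec n) : Finset (Fin n) :=
  Finset.univ.filter fun i => u.1 i ≠ 0 ∨ u.2 i ≠ 0

/-- Restriction of a Pauli operator to a subset `U` of qubits (identity elsewhere). -/
def prestrict {n : ℕ} (u : PauliVec n) (U : Finset (Fin n)) : PauliVec n :=
  (fun i => if i ∈ U then u.1 i else 0, fun i => if i ∈ U then u.2 i else 0)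

open scoped Classical in
/-- Outer boundary of a set `T` of qubits: qubits outside `T` sharing the support of
some stabilizer generator with a qubit of `T`. -/
noncomputable def bdryPlus {n : ℕ} {ι : Type*} (g : ι → PauliVec n)
    (T : Finset (Fin n)) : Finset (Fin n) :=
  Finset.univ.filter fun v => v ∉ T ∧ ∃ a : ι, v ∈ psupp (g a) ∧ (psupp (g a) ∩ T).Nonempty

noncomputable def symB (n : ℕ) : LinearMap.BilinForm (ZMod 2) (PauliVec n) :=
  LinearMap.mk₂ (ZMod 2) sympForm
    (fun u u' v => by
      unfold sympForm
      rw [← Finset.sum_add_distrib]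
      exact Finset.sum_congr rfl fun i _ => by
        simp only [Prod.fst_add, Prod.snd_add, Pi.add_apply]; ring)
    (fun c u v => by
      unfold sympForm
      rw [smul_eq_mul, Finset.mul_sum]
      exact Finset.sum_congr rfl fun i _ => by
        simp only [Prod.smul_fst, Prod.smul_snd, Pi.smul_apply, smul_eq_mul]; ring)
    (fun u v v' => by
      unfold sympForm
      rw [← Finset.sum_add_distrib]
      exact Finset.sum_congr rfl fun i _ => by
        simp only [Prod.fst_add, Prod.snd_add, Pi.add_apply]; ring)
    (fun c u v => by
      unfold sympForm
      rw [smul_eq_mul, Finset.mul_sum]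
      exact Finset.sum_congr rfl fun i _ => by
        simp only [Prod.smul_fst, Prod.smul_snd, Pi.smul_apply, smul_eq_mul]; ring)

lemma symB_apply {n : ℕ} (u v : PauliVec n) : symB n u v = sympForm u v := rfl

lemma sympForm_comm {n : ℕ} (u v : PauliVec n) : sympForm u v = sympForm v u :=
  Finset.sum_congr rfl fun i _ => by ring

lemma symB_refl (n : ℕ) : (symB n).IsRefl := by
  intro u v h
  rw [symB_apply, sympForm_comm, ← symB_apply]; exact h

lemma not_mem_psupp {n : ℕ} {u : PauliVec n} {i : Fin n} (h : i ∉ psupp u) :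
    u.1 i = 0 ∧ u.2 i = 0 := by
  simpa [psupp, not_or] using h

lemma symB_nondeg (n : ℕ) : (symB n).Nondegenerate := by
  refine (LinearMap.IsRefl.nondegenerate_iff_separatingLeft (symB_refl n)).mpr ?_
  intro u h
  have h1 : ∀ i, u.1 i = 0 := by
    intro i
    have := h (0, fun j => if j = i then 1 else 0)
    simpa [symB_apply, sympForm, Finset.sum_ite_eq'] using this
  have h2 : ∀ i, u.2 i = 0 := by
    intro i
    have := h ((fun j => if j = i then 1 else 0), 0)
    simpa [symB_apply, sympForm, Finset.sum_ite_eq'] using this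
  exact Prod.ext (funext h1) (funext h2)

lemma psupp_prestrict_subset {n : ℕ} (u : PauliVec n) (T : Finset (Fin n)) :
    psupp (prestrict u T) ⊆ T := by
  intro i hi
  by_contra hiT
  have := not_mem_psupp (u := prestrict u T) (i := i)
  simp only [psupp, Finset.mem_filter, Finset.mem_univ, true_and, prestrict, if_neg hiT] at hi
  simp [hiT] at hi

lemma sympForm_zero_of_disj {n : ℕ} (u v : PauliVec n)
    (h : ∀ i, i ∈ psupp u → i ∉ psupp v) : sympForm u v = 0 := by
  apply Finset.sum_eq_zero
  intro i _
  by_cases hi : i ∈ psupp u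
  · obtain ⟨h1, h2⟩ := not_mem_psupp (h i hi)
    rw [h1, h2, mul_zero, mul_zero, add_zero]
  · obtain ⟨h1, h2⟩ := not_mem_psupp hi
    rw [h1, h2, zero_mul, zero_mul, add_zero]

/-- Boundary argument: if a logical `M` is supported off `U` and `∂₊T ⊆ U`,
the restriction of `M` to `T` is logical. -/
lemma restrict_logical {n : ℕ} {ι : Type*} (g : ι → PauliVec n)
    (U T : Finset (Fin n)) (hbd : bdryPlus g T ⊆ U) (M : PauliVec n)
    (hM : ∀ a, sympForm M (g a) = 0) (hMU : psupp M ∩ U = ∅) :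
    ∀ a, sympForm (prestrict M T) (g a) = 0 := by
  intro a
  by_cases hne : (psupp (g a) ∩ T).Nonempty
  · rw [← hM a]
    apply Finset.sum_congr rfl
    intro i _
    by_cases hiT : i ∈ T
    · simp [prestrict, hiT]
    · by_cases hgi : i ∈ psupp (g a)
      · have hiU : i ∈ U := by
          apply hbd
          simp only [bdryPlus, Finset.mem_filter, Finset.mem_univ, true_and]
          exact ⟨hiT, a, hgi, hne⟩
        have hiM : i ∉ psupp M := fun h =>
          (Finset.eq_empty_iff_forall_notMem.mp hMU i) (Finset.mem_inter.mpr ⟨h, hiU⟩)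
        obtain ⟨h1, h2⟩ := not_mem_psupp hiM
        simp [prestrict, hiT, h1, h2]
      · obtain ⟨h1, h2⟩ := not_mem_psupp hgi
        simp [prestrict, hiT, h1, h2]
  · apply Finset.sum_eq_zero
    intro i _
    by_cases hiT : i ∈ T
    · have hgi : i ∉ psupp (g a) := fun h =>
        hne ⟨i, Finset.mem_inter.mpr ⟨h, hiT⟩⟩
      obtain ⟨h1, h2⟩ := not_mem_psupp hgi
      rw [h1, h2, mul_zero, mul_zero, add_zero]
    · simp [prestrict, hiT]

/-- Expansion Lemma: if every logical operator can be cleaned off `U` (has a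
representative modulo stabilizers supported in the complement of `U`), `T` is
correctable, and `∂₊T ⊆ U`, then `T ∪ U` is correctable: every logical operator
supported in `T ∪ U` is a stabilizer. -/
theorem stmt9_expansion_lemma {n : ℕ} {ι : Type*}
    (g : ι → PauliVec n)
    (S : Submodule (ZMod 2) (PauliVec n))
    (hS : S = Submodule.span (ZMod 2) (Set.range g))
    (hiso : ∀ a b : ι, sympForm (g a) (g b) = 0)
    (U T : Finset (Fin n))
    (hclean : ∀ L : PauliVec n, (∀ a : ι, sympForm L (g a) = 0) →
      ∃ L' : PauliVec n, (∀ a : ι, sympForm L' (g a) = 0) ∧ L - L' ∈ S ∧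
        psupp L' ∩ U = ∅)
    (hTcorr : ∀ L : PauliVec n, (∀ a : ι, sympForm L (g a) = 0) →
      psupp L ⊆ T → L ∈ S)
    (hbd : bdryPlus g T ⊆ U) :
    ∀ L : PauliVec n, (∀ a : ι, sympForm L (g a) = 0) →
      psupp L ⊆ T ∪ U → L ∈ S := by
  intro L hL hsupp
  -- a logical operator is orthogonal to everything in S
  have horthS : ∀ P : PauliVec n, (∀ a, sympForm P (g a) = 0) →
      ∀ s ∈ S, sympForm P s = 0 := by
    intro P hP s hs
    have hle : S ≤ LinearMap.ker (symB n P) := by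
      rw [hS, Submodule.span_le]
      rintro _ ⟨a, rfl⟩
      simpa [LinearMap.mem_ker, symB_apply] using hP a
    exact hle hs
  rw [← LinearMap.BilinForm.orthogonal_orthogonal (symB_nondeg n) (symB_refl n) S,
    LinearMap.BilinForm.mem_orthogonal_iff]
  intro M hM
  have Mlog : ∀ a, sympForm M (g a) = 0 := by
    intro a
    have hga : g a ∈ S := hS ▸ Submodule.subset_span ⟨a, rfl⟩
    have := (LinearMap.BilinForm.mem_orthogonal_iff.mp hM) (g a) hga
    rw [sympForm_comm]
    exact this
  obtain ⟨M', hM'log, hMM', hM'U⟩ := hclean M Mlog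
  have hTlog := restrict_logical g U T hbd M' hM'log hM'U
  have hTS : prestrict M' T ∈ S := hTcorr _ hTlog (psupp_prestrict_subset M' T)
  have hdisj : sympForm L (M' - prestrict M' T) = 0 := by
    apply sympForm_zero_of_disj
    intro i hiL hiD
    have hiTU := hsupp hiL
    have : i ∉ psupp (M' - prestrict M' T) := by
      rcases Finset.mem_union.mp hiTU with hiT | hiU
      · simp only [psupp, Finset.mem_filter, Finset.mem_univ, true_and]; simp [psupp, prestrict, Prod.fst_sub, Prod.snd_sub, Pi.sub_apply, hiT]
      · by_cases hiT : i ∈ T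
        · simp only [psupp, Finset.mem_filter, Finset.mem_univ, true_and]; simp [psupp, prestrict, Prod.fst_sub, Prod.snd_sub, Pi.sub_apply, hiT]
        · have hiM : i ∉ psupp M' := fun h =>
            (Finset.eq_empty_iff_forall_notMem.mp hM'U i) (Finset.mem_inter.mpr ⟨h, hiU⟩)
          obtain ⟨h1, h2⟩ := not_mem_psupp hiM
          simp only [psupp, Finset.mem_filter, Finset.mem_univ, true_and]; simp [psupp, prestrict, Prod.fst_sub, Prod.snd_sub, Pi.sub_apply, hiT, h1, h2]
    exact this hiD
  have hdecomp : M = (M - M') + prestrict M' T + (M' - prestrict M' T) := by abel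
  have hexp : sympForm L M = sympForm L (M - M') + sympForm L (prestrict M' T) +
      sympForm L (M' - prestrict M' T) := by
    have h : (symB n L) M = (symB n L) ((M - M') + prestrict M' T + (M' - prestrict M' T)) := by
      rw [← hdecomp]
    rw [map_add, map_add] at h
    exact h
  show (symB n) M L = 0
  rw [symB_apply, sympForm_comm, hexp, horthS L hL _ hMM', horthS L hL _ hTS, hdisj,
    add_zero, add_zero]
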